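/- The Rieffel product is associative: let Θ be an invertible skew-symmetric real 4×4 matrix and let f, g, h : ℝ⁴ → ℂ be Schwartz functions. Then (interpreting each product as the absolutely convergent double integral, which is legitimate since the Rieffel product of two Schwartz functions is again Schwartz) one has ((f ×_Θ g) ×_Θ h)(z) = (f ×_Θ (g ×_Θ h))(z) for every z ∈ ℝ⁴. -/

import Mathlib

noncomputable section

open MeasureTheory Filter Matrix
open Real

/-- ℝ⁴ as a Euclidean space. -/
abbrev V4 : Type := EuclideanSpace ℝ (Fin 4)

/-- The Minkowski bilinear form B(x,y) = -x⁰y⁰ + x¹y¹ + x²y² + x³y³. -/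
def minkB (x y : V4) : ℝ := -(x 0 * y 0) + x 1 * y 1 + x 2 * y 2 + x 3 * y 3

/-- Matrix–vector multiplication Θx on ℝ⁴. -/
def thetaAct (Θ : Matrix (Fin 4) (Fin 4) ℝ) (x : V4) : V4 :=
  WithLp.toLp 2 (fun i => ∑ j, Θ i j * x j)

/-- The constant (2π)⁻⁴ as a complex number. -/
def c4 : ℂ := ((((2 * Real.pi) ^ 4)⁻¹ : ℝ) : ℂ)

/-- The Rieffel product (f ×_Θ g)(z) = (2π)⁻⁴ ∬ f(z+Θx) g(z+y) e^{-i B(x,y)} dx dy. -/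
def rieffel (Θ : Matrix (Fin 4) (Fin 4) ℝ) (f g : V4 → ℂ) (z : V4) : ℂ :=
  c4 * ∫ p : V4 × V4, f (z + thetaAct Θ p.1) * g (z + p.2) *
    Complex.exp (-Complex.I * (minkB p.1 p.2 : ℂ))

/-- The Minkowski Fourier transform (Fg)(ξ) = ∫ g(x) e^{-i B(ξ,x)} dx. -/
def minkFT (g : V4 → ℂ) (ξ : V4) : ℂ :=
  ∫ x : V4, g x * Complex.exp (-Complex.I * (minkB ξ x : ℂ))

/-- thetaAct as a continuous linear equivalence. -/
def Tcle (Θ : Matrix (Fin 4) (Fin 4) ℝ) (hinv : IsUnit Θ) : V4 ≃L[ℝ] V4 :=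
  (LinearEquiv.ofLinear (Matrix.toEuclideanLin Θ) (Matrix.toEuclideanLin Θ⁻¹)
    (by
      have hd : IsUnit Θ.det := (Matrix.isUnit_iff_isUnit_det Θ).mp hinv
      ext x i
      simp [Matrix.toEuclideanLin_apply, Matrix.mulVec_mulVec, Matrix.mul_nonsing_inv Θ hd])
    (by
      have hd : IsUnit Θ.det := (Matrix.isUnit_iff_isUnit_det Θ).mp hinv
      ext x i
      simp [Matrix.toEuclideanLin_apply, Matrix.mulVec_mulVec,
        Matrix.nonsing_inv_mul Θ hd])).toContinuousLinearEquiv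

lemma Tcle_apply (Θ : Matrix (Fin 4) (Fin 4) ℝ) (hinv : IsUnit Θ) (x : V4) :
    Tcle Θ hinv x = thetaAct Θ x := by
  ext i
  simp [Tcle, thetaAct, Matrix.toEuclideanLin_apply, Matrix.mulVec, dotProduct]

/-- Composition with a continuous linear equivalence preserves integrability. -/
lemma integrable_comp_cle {E : Type*} [NormedAddCommGroup E] {F : V4 → E}
    (hF : Integrable F) (T : V4 ≃L[ℝ] V4) : Integrable fun x => F (T x) := by
  have hdet : LinearMap.det (T.toLinearEquiv : V4 →ₗ[ℝ] V4) ≠ 0 :=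
    (LinearEquiv.isUnit_det' T.toLinearEquiv).ne_zero
  have hfun : ⇑T.toHomeomorph.toMeasurableEquiv = ⇑(T.toLinearEquiv : V4 →ₗ[ℝ] V4) := rfl
  have h1 : Integrable F (Measure.map (⇑T.toHomeomorph.toMeasurableEquiv) volume) := by
    rw [hfun, Measure.map_linearMap_addHaar_eq_smul_addHaar (volume : Measure V4) hdet]
    exact hF.smul_measure ENNReal.ofReal_ne_top
  exact (integrable_map_equiv T.toHomeomorph.toMeasurableEquiv F).mp h1

def Llin : V4 →ₗ[ℝ] V4 where
  toFun x := (WithLp.toLp 2 (fun i => (2 * π)⁻¹ * (if i = 0 then -(x i) else x i)) : EuclideanSpace ℝ (Fin 4))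
  map_add' x y := by ext i; by_cases hi : i = 0 <;> simp [hi] <;> ring
  map_smul' c x := by ext i; by_cases hi : i = 0 <;> simp [hi] <;> ring

def Linv : V4 →ₗ[ℝ] V4 where
  toFun x := (WithLp.toLp 2 (fun i => (2 * π) * (if i = 0 then -(x i) else x i)) : EuclideanSpace ℝ (Fin 4))
  map_add' x y := by ext i; by_cases hi : i = 0 <;> simp [hi] <;> ring
  map_smul' c x := by ext i; by_cases hi : i = 0 <;> simp [hi] <;> ring

def Lcle : V4 ≃L[ℝ] V4 :=
  (LinearEquiv.ofLinear Llin Linv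
    (by ext x i; by_cases hi : i = 0 <;> (simp [Llin, Linv, hi]; field_simp; try ring))
    (by ext x i; by_cases hi : i = 0 <;> (simp [Llin, Linv, hi]; field_simp; try ring))
    ).toContinuousLinearEquiv

/-- Minkowski Fourier transform of a Schwartz function, as a Schwartz function. -/
def mFT (f : SchwartzMap V4 ℂ) : SchwartzMap V4 ℂ :=
  SchwartzMap.compCLMOfContinuousLinearEquiv ℝ Lcle
    (SchwartzMap.fourierTransformCLM ℝ f)

lemma minkFT_eq (f : SchwartzMap V4 ℂ) (ξ : V4) : minkFT (⇑f) ξ = mFT f ξ := by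
  have h0 : mFT f ξ = FourierTransform.fourier (⇑f : V4 → ℂ) (Lcle ξ) := rfl
  rw [h0, Real.fourier_eq']
  unfold minkFT
  congr 1
  ext x
  rw [smul_eq_mul, mul_comm]
  congr 2
  have hinner : (inner ℝ x (Lcle ξ) : ℝ) = (2 * π)⁻¹ * minkB ξ x := by
    simp [Lcle, Llin, LinearEquiv.ofLinear, PiLp.inner_apply, RCLike.inner_apply, minkB,
      Fin.sum_univ_four]
    ring
  have hr : -2 * π * ((2 * π)⁻¹ * minkB ξ x) = -(minkB ξ x) := by
    field_simp
  rw [hinner, hr]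
  push_cast
  ring

def eB (x y : V4) : ℂ := Complex.exp (-Complex.I * (minkB x y : ℂ))
def eP (x y : V4) : ℂ := Complex.exp (Complex.I * (minkB x y : ℂ))

@[simp] lemma minkB_add_right (x y z : V4) : minkB x (y + z) = minkB x y + minkB x z := by
  simp [minkB]; ring
@[simp] lemma minkB_add_left (x y z : V4) : minkB (x + y) z = minkB x z + minkB y z := by
  simp [minkB]; ring
@[simp] lemma minkB_sub_left (x y z : V4) : minkB (x - y) z = minkB x z - minkB y z := by
  simp [minkB]; ring

@[simp] lemma norm_eB (x y : V4) : ‖eB x y‖ = 1 := by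
  simp [eB, Complex.norm_exp]
@[simp] lemma norm_eP (x y : V4) : ‖eP x y‖ = 1 := by
  simp [eP, Complex.norm_exp]

lemma phase0 (d c y : V4) : eP d c * eB d (c + y) = eB d y := by
  rw [eP, eB, eB, ← Complex.exp_add]
  congr 1
  push_cast [minkB_add_right]
  ring

lemma phase1 (u z y x : V4) : eP u (z + y) * eB x y = eP u z * eB (x - u) y := by
  rw [eP, eB, eP, eB, ← Complex.exp_add, ← Complex.exp_add]
  congr 1
  push_cast [minkB_add_right, minkB_sub_left]
  ring

lemma phase3 (w x z t : V4) : eP (w - x) (z + t) * eP x z = eP w z * eP (w - x) t := by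
  rw [eP, eP, eP, eP, ← Complex.exp_add, ← Complex.exp_add]
  congr 1
  push_cast [minkB_add_right, minkB_sub_left]
  ring

lemma continuous_minkB : Continuous fun p : V4 × V4 => minkB p.1 p.2 := by
  unfold minkB; fun_prop

lemma continuous_eB : Continuous fun p : V4 × V4 => eB p.1 p.2 := by
  exact Complex.continuous_exp.comp
    (continuous_const.mul (Complex.continuous_ofReal.comp continuous_minkB))

lemma shiftFT (ψ : SchwartzMap V4 ℂ) (c d : V4) :
    (∫ y, ψ (c + y) * eB d y) = eP d c * minkFT (⇑ψ) d := by
  have key : ∀ y : V4, ψ (c + y) * eB d y = eP d c * (ψ (c + y) * eB d (c + y)) := by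
    intro y; rw [← phase0 d c y]; ring
  simp_rw [key]
  rw [integral_const_mul]
  congr 1
  have := integral_add_left_eq_self (μ := (volume : Measure V4)) (fun w => ψ w * eB d w) c
  simpa [minkFT, eB] using this

variable {Θ : Matrix (Fin 4) (Fin 4) ℝ}

lemma continuous_thetaAct (hinv : IsUnit Θ) : Continuous (thetaAct Θ) := by
  have h := (Tcle Θ hinv).continuous
  have he : ⇑(Tcle Θ hinv) = thetaAct Θ := funext (Tcle_apply Θ hinv)
  rwa [he] at h

lemma integrable_shift_T (hinv : IsUnit Θ) (φ : SchwartzMap V4 ℂ) (c : V4) :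
    Integrable fun x => φ (c + thetaAct Θ x) := by
  have h := integrable_comp_cle ((φ.integrable (μ := (volume : Measure V4))).comp_add_left c) (Tcle Θ hinv)
  simpa [Tcle_apply Θ hinv] using h

lemma prodInt (hinv : IsUnit Θ) (φ ψ : SchwartzMap V4 ℂ) (c : V4) :
    Integrable (fun p : V4 × V4 => φ (c + thetaAct Θ p.1) * ψ (c + p.2) * eB p.1 p.2)
      ((volume : Measure V4).prod volume) := by
  have h1 := (integrable_shift_T hinv φ c).norm
  have h2 := ((ψ.integrable (μ := (volume : Measure V4))).comp_add_left c).norm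
  refine Integrable.mono' (h1.mul_prod h2) ?_ ?_
  · exact (((φ.continuous.comp (continuous_const.add
        ((continuous_thetaAct hinv).comp continuous_fst))).mul
      (ψ.continuous.comp (continuous_const.add continuous_snd))).mul
      continuous_eB).aestronglyMeasurable
  · filter_upwards with p
    simp only [norm_mul, norm_eB, mul_one, le_refl]

lemma rep (hinv : IsUnit Θ) (φ ψ : SchwartzMap V4 ℂ) (c : V4) :
    rieffel Θ (⇑φ) (⇑ψ) c
      = c4 * ∫ x, φ (c + thetaAct Θ x) * (eP x c * minkFT (⇑ψ) x) := by
  rw [rieffel]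
  congr 1
  have hvol : (volume : Measure (V4 × V4)) = (volume : Measure V4).prod volume :=
    Measure.volume_eq_prod V4 V4
  calc ∫ p : V4 × V4, φ (c + thetaAct Θ p.1) * ψ (c + p.2) *
          Complex.exp (-Complex.I * (minkB p.1 p.2 : ℂ))
      = ∫ x, ∫ y, φ (c + thetaAct Θ x) * ψ (c + y) * eB x y := by
        rw [hvol]; exact integral_prod _ (prodInt hinv φ ψ c)
    _ = ∫ x, φ (c + thetaAct Θ x) * (eP x c * minkFT (⇑ψ) x) := by
        congr 1; funext x
        simp_rw [mul_assoc]
        rw [integral_const_mul, shiftFT]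

lemma continuous_eP_comp {α : Type*} [TopologicalSpace α] {u v : α → V4}
    (hu : Continuous u) (hv : Continuous v) : Continuous fun a => eP (u a) (v a) :=
  Complex.continuous_exp.comp (continuous_const.mul
    (Complex.continuous_ofReal.comp (continuous_minkB.comp (hu.prodMk hv))))

lemma continuous_eB_comp {α : Type*} [TopologicalSpace α] {u v : α → V4}
    (hu : Continuous u) (hv : Continuous v) : Continuous fun a => eB (u a) (v a) :=
  Complex.continuous_exp.comp ((continuous_const.mul
    (Complex.continuous_ofReal.comp (continuous_minkB.comp (hu.prodMk hv)))))

lemma thetaAct_add (x y : V4) : thetaAct Θ (x + y) = thetaAct Θ x + thetaAct Θ y := by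
  ext i
  simp [thetaAct, mul_add, Finset.sum_add_distrib]

/-- Reparametrized representation with the Schwartz Fourier transform. -/
lemma rep' (hinv : IsUnit Θ) (φ ψ : SchwartzMap V4 ℂ) (c : V4) :
    rieffel Θ (⇑φ) (⇑ψ) c
      = c4 * ∫ x, φ (c + thetaAct Θ x) * (eP x c * mFT ψ x) := by
  rw [rep hinv φ ψ c]
  simp_rw [minkFT_eq]

/-- Pointwise norm bound for the Rieffel product. -/
lemma normRieffel_le (hinv : IsUnit Θ) (φ ψ : SchwartzMap V4 ℂ) (w : V4) :
    ‖rieffel Θ (⇑φ) (⇑ψ) w‖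
      ≤ ‖c4‖ * ∫ u, ‖φ (w + thetaAct Θ u)‖ * ‖mFT ψ u‖ := by
  rw [rep' hinv φ ψ w, norm_mul]
  gcongr
  calc ‖∫ x, φ (w + thetaAct Θ x) * (eP x w * mFT ψ x)‖
      ≤ ∫ x, ‖φ (w + thetaAct Θ x) * (eP x w * mFT ψ x)‖ :=
        norm_integral_le_integral_norm _
    _ = ∫ u, ‖φ (w + thetaAct Θ u)‖ * ‖mFT ψ u‖ := by
        congr 1; funext u
        rw [norm_mul, norm_mul, norm_eP, one_mul]

/-- Integrability of (x,u) ↦ ‖φ(c+Θx+Θu)‖‖G u‖ on the product. -/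
lemma intDD (hinv : IsUnit Θ) (φ G : SchwartzMap V4 ℂ) (c : V4) :
    Integrable (fun q : V4 × V4 =>
        ‖φ (c + thetaAct Θ q.1 + thetaAct Θ q.2)‖ * ‖G q.2‖)
      ((volume : Measure V4).prod volume) := by
  have hmeas : AEStronglyMeasurable (fun q : V4 × V4 =>
      ‖φ (c + thetaAct Θ q.1 + thetaAct Θ q.2)‖ * ‖G q.2‖)
      ((volume : Measure V4).prod volume) := by
    apply Continuous.aestronglyMeasurable
    exact ((φ.continuous.comp ((continuous_const.add
        ((continuous_thetaAct hinv).comp continuous_fst)).add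
        ((continuous_thetaAct hinv).comp continuous_snd))).norm).mul
      ((G.continuous.comp continuous_snd).norm)
  rw [integrable_prod_iff' hmeas]
  constructor
  · filter_upwards with u
    have h1 : Integrable fun x => φ (c + thetaAct Θ u + thetaAct Θ x) :=
      integrable_shift_T hinv φ (c + thetaAct Θ u)
    have h2 : (fun x => ‖φ (c + thetaAct Θ x + thetaAct Θ u)‖ * ‖G u‖)
        = fun x => ‖φ (c + thetaAct Θ u + thetaAct Θ x)‖ * ‖G u‖ := by
      funext x; rw [add_right_comm]
    rw [h2]
    exact h1.norm.mul_const _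
  · have key : ∀ u : V4, (∫ x, ‖‖φ (c + thetaAct Θ x + thetaAct Θ u)‖ * ‖G u‖‖)
        = (∫ x, ‖φ (c + thetaAct Θ x)‖) * ‖G u‖ := by
      intro u
      have h3 : ∀ x : V4, ‖‖φ (c + thetaAct Θ x + thetaAct Θ u)‖ * ‖G u‖‖
          = ‖φ (c + thetaAct Θ (u + x))‖ * ‖G u‖ := by
        intro x
        rw [norm_mul, norm_norm, norm_norm, thetaAct_add,
          show c + thetaAct Θ x + thetaAct Θ u
            = c + (thetaAct Θ u + thetaAct Θ x) from by abel]
      simp_rw [h3]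
      rw [integral_mul_const]
      congr 1
      exact integral_add_left_eq_self (μ := (volume : Measure V4))
        (fun s => ‖φ (c + thetaAct Θ s)‖) u
    simp_rw [key]
    exact ((G.integrable (μ := (volume : Measure V4))).norm.const_mul _)

/-- Integrability of (y,u) ↦ ‖φ(c+y+Θu)‖‖G u‖ on the product. -/
lemma intDD' (hinv : IsUnit Θ) (φ G : SchwartzMap V4 ℂ) (c : V4) :
    Integrable (fun q : V4 × V4 =>
        ‖φ (c + q.1 + thetaAct Θ q.2)‖ * ‖G q.2‖)
      ((volume : Measure V4).prod volume) := by
  have hmeas : AEStronglyMeasurable (fun q : V4 × V4 =>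
      ‖φ (c + q.1 + thetaAct Θ q.2)‖ * ‖G q.2‖)
      ((volume : Measure V4).prod volume) := by
    apply Continuous.aestronglyMeasurable
    exact ((φ.continuous.comp ((continuous_const.add continuous_fst).add
        ((continuous_thetaAct hinv).comp continuous_snd))).norm).mul
      ((G.continuous.comp continuous_snd).norm)
  rw [integrable_prod_iff' hmeas]
  constructor
  · filter_upwards with u
    have h1 : Integrable fun y => φ ((c + thetaAct Θ u) + y) :=
      (φ.integrable (μ := (volume : Measure V4))).comp_add_left _
    have h2 : (fun y => ‖φ (c + y + thetaAct Θ u)‖ * ‖G u‖)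
        = fun y => ‖φ ((c + thetaAct Θ u) + y)‖ * ‖G u‖ := by
      funext y; congr 2; abel
    rw [h2]
    exact h1.norm.mul_const _
  · have key : ∀ u : V4, (∫ y, ‖‖φ (c + y + thetaAct Θ u)‖ * ‖G u‖‖)
        = (∫ s : V4, ‖φ s‖) * ‖G u‖ := by
      intro u
      have h3 : ∀ y : V4, ‖‖φ (c + y + thetaAct Θ u)‖ * ‖G u‖‖
          = ‖φ ((c + thetaAct Θ u) + y)‖ * ‖G u‖ := by
        intro y
        rw [norm_mul, norm_norm, norm_norm]
        congr 2; abel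
      simp_rw [h3]
      rw [integral_mul_const]
      congr 1
      exact integral_add_left_eq_self (μ := (volume : Measure V4))
        (fun s => ‖φ s‖) (c + thetaAct Θ u)
    simp_rw [key]
    exact ((G.integrable (μ := (volume : Measure V4))).norm.const_mul _)

/-- The Rieffel product of Schwartz functions is continuous. -/
lemma cont_rieffel (hinv : IsUnit Θ) (φ ψ : SchwartzMap V4 ℂ) :
    Continuous (rieffel Θ (⇑φ) (⇑ψ)) := by
  have hrep : rieffel Θ (⇑φ) (⇑ψ)
      = fun w => c4 * ∫ x, φ (w + thetaAct Θ x) * (eP x w * mFT ψ x) :=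
    funext fun w => rep' hinv φ ψ w
  rw [hrep]
  apply continuous_const.mul
  apply continuous_of_dominated (bound := fun u =>
    (SchwartzMap.seminorm ℝ 0 0) φ * ‖mFT ψ u‖)
  · intro w
    apply Continuous.aestronglyMeasurable
    exact (φ.continuous.comp (continuous_const.add (continuous_thetaAct hinv))).mul
      ((continuous_eP_comp continuous_id continuous_const).mul (mFT ψ).continuous)
  · intro w
    filter_upwards with u
    rw [norm_mul, norm_mul, norm_eP, one_mul]
    gcongr
    exact φ.norm_le_seminorm ℝ _
  · exact ((mFT ψ).integrable (μ := (volume : Measure V4))).norm.const_mul _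
  · filter_upwards with u
    exact (φ.continuous.comp ((continuous_id.add continuous_const))).mul
      ((continuous_eP_comp continuous_const continuous_id).mul continuous_const)

/-- Integrability of x ↦ (f ×_Θ g)(c + Θ x). -/
lemma integrable_rieffel_T (hinv : IsUnit Θ) (φ ψ : SchwartzMap V4 ℂ) (c : V4) :
    Integrable fun x => rieffel Θ (⇑φ) (⇑ψ) (c + thetaAct Θ x) := by
  refine Integrable.mono'
    (((intDD hinv φ (mFT ψ) c).integral_prod_left).const_mul ‖c4‖) ?_ ?_
  · exact ((cont_rieffel hinv φ ψ).comp
      (continuous_const.add (continuous_thetaAct hinv))).aestronglyMeasurable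
  · filter_upwards with x
    exact normRieffel_le hinv φ ψ (c + thetaAct Θ x)

/-- Integrability of y ↦ (g ×_Θ h)(c + y). -/
lemma integrable_rieffel_add (hinv : IsUnit Θ) (φ ψ : SchwartzMap V4 ℂ) (c : V4) :
    Integrable fun y => rieffel Θ (⇑φ) (⇑ψ) (c + y) := by
  refine Integrable.mono'
    (((intDD' hinv φ (mFT ψ) c).integral_prod_left).const_mul ‖c4‖) ?_ ?_
  · exact ((cont_rieffel hinv φ ψ).comp
      (continuous_const.add continuous_id)).aestronglyMeasurable
  · filter_upwards with y
    exact normRieffel_le hinv φ ψ (c + y)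

/-- Integrability witness for the left-hand side double integral. -/
lemma intLHS (hinv : IsUnit Θ) (φ ψ χ : SchwartzMap V4 ℂ) (z : V4) :
    Integrable (fun p : V4 × V4 =>
        rieffel Θ (⇑φ) (⇑ψ) (z + thetaAct Θ p.1) * χ (z + p.2) * eB p.1 p.2)
      ((volume : Measure V4).prod volume) := by
  have hb : Integrable (fun p : V4 × V4 =>
      (‖c4‖ * ∫ u, ‖φ (z + thetaAct Θ p.1 + thetaAct Θ u)‖ * ‖mFT ψ u‖) * ‖χ (z + p.2)‖)
      ((volume : Measure V4).prod volume) :=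
    (((intDD hinv φ (mFT ψ) z).integral_prod_left).const_mul ‖c4‖).mul_prod
      ((χ.integrable (μ := (volume : Measure V4))).comp_add_left z).norm
  refine Integrable.mono' hb ?_ ?_
  · apply Continuous.aestronglyMeasurable
    exact (((cont_rieffel hinv φ ψ).comp (continuous_const.add
        ((continuous_thetaAct hinv).comp continuous_fst))).mul
      (χ.continuous.comp (continuous_const.add continuous_snd))).mul
      (continuous_eB_comp continuous_fst continuous_snd)
  · filter_upwards with p
    rw [norm_mul, norm_mul, norm_eB, mul_one]
    gcongr
    exact normRieffel_le hinv φ ψ _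
/-- Integrability witness for the right-hand side double integral. -/
lemma intRHS (hinv : IsUnit Θ) (φ ψ χ : SchwartzMap V4 ℂ) (z : V4) :
    Integrable (fun p : V4 × V4 =>
        φ (z + thetaAct Θ p.1) * rieffel Θ (⇑ψ) (⇑χ) (z + p.2) * eB p.1 p.2)
      ((volume : Measure V4).prod volume) := by
  have hb : Integrable (fun p : V4 × V4 =>
      ‖φ (z + thetaAct Θ p.1)‖ *
        (‖c4‖ * ∫ u, ‖ψ (z + p.2 + thetaAct Θ u)‖ * ‖mFT χ u‖))
      ((volume : Measure V4).prod volume) :=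
    (integrable_shift_T hinv φ z).norm.mul_prod
      (((intDD' hinv ψ (mFT χ) z).integral_prod_left).const_mul ‖c4‖)
  refine Integrable.mono' hb ?_ ?_
  · apply Continuous.aestronglyMeasurable
    exact ((φ.continuous.comp (continuous_const.add
        ((continuous_thetaAct hinv).comp continuous_fst))).mul
      ((cont_rieffel hinv ψ χ).comp (continuous_const.add continuous_snd))).mul
      (continuous_eB_comp continuous_fst continuous_snd)
  · filter_upwards with p
    rw [norm_mul, norm_mul, norm_eB, mul_one]
    gcongr
    exact normRieffel_le hinv ψ χ _

/-- The common core integrand. -/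
def PhiC (Θ : Matrix (Fin 4) (Fin 4) ℝ) (f g h : SchwartzMap V4 ℂ) (z a b : V4) : ℂ :=
  f (z + thetaAct Θ b) * mFT g (b - a) * mFT h a * eP b z * eP (b - a) (thetaAct Θ a)


lemma intc {F G : V4 → ℂ} (h : ∀ x, F x = G x) : (∫ x, F x) = ∫ x, G x := by
  congr 1; funext x; exact h x

lemma intPhi (hinv : IsUnit Θ) (f g h : SchwartzMap V4 ℂ) (z : V4) :
    Integrable (Function.uncurry (PhiC Θ f g h z)) ((volume : Measure V4).prod volume) := by
  have hb : Integrable (fun q : V4 × V4 =>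
      ((SchwartzMap.seminorm ℝ 0 0) (mFT g) * ‖mFT h q.1‖) * ‖f (z + thetaAct Θ q.2)‖)
      ((volume : Measure V4).prod volume) :=
    (((mFT h).integrable (μ := (volume : Measure V4))).norm.const_mul _).mul_prod
      (integrable_shift_T hinv f z).norm
  refine Integrable.mono' hb ?_ ?_
  · apply Continuous.aestronglyMeasurable
    unfold Function.uncurry PhiC
    exact (((((f.continuous.comp (continuous_const.add
        ((continuous_thetaAct hinv).comp continuous_snd))).mul
      ((mFT g).continuous.comp (continuous_snd.sub continuous_fst))).mul
      ((mFT h).continuous.comp continuous_fst)).mul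
      (continuous_eP_comp continuous_snd continuous_const)).mul
      (continuous_eP_comp (continuous_snd.sub continuous_fst)
        ((continuous_thetaAct hinv).comp continuous_fst)))
  · filter_upwards with q
    unfold Function.uncurry PhiC
    rw [norm_mul, norm_mul, norm_mul, norm_mul, norm_eP, norm_eP, mul_one, mul_one]
    have h1 : ‖mFT g (q.2 - q.1)‖ ≤ (SchwartzMap.seminorm ℝ 0 0) (mFT g) :=
      (mFT g).norm_le_seminorm ℝ _
    calc ‖f (z + thetaAct Θ q.2)‖ * ‖mFT g (q.2 - q.1)‖ * ‖mFT h q.1‖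
        = ‖mFT g (q.2 - q.1)‖ * ‖mFT h q.1‖ * ‖f (z + thetaAct Θ q.2)‖ := by ring
      _ ≤ (SchwartzMap.seminorm ℝ 0 0) (mFT g) * ‖mFT h q.1‖ * ‖f (z + thetaAct Θ q.2)‖ := by
          gcongr

/-- associativity of the Rieffel product of Schwartz functions, with each
product interpreted as the absolutely convergent double integral. -/
theorem rieffel_assoc (Θ : Matrix (Fin 4) (Fin 4) ℝ)
    (hinv : IsUnit Θ) (hskew : Θᵀ = -Θ)
    (f g h : SchwartzMap V4 ℂ) (z : V4) :
    rieffel Θ (rieffel Θ (⇑f) (⇑g)) (⇑h) z = rieffel Θ (⇑f) (rieffel Θ (⇑g) (⇑h)) z := by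
  have hswap : (∫ a, ∫ b, PhiC Θ f g h z a b) = ∫ b, ∫ a, PhiC Θ f g h z a b :=
    integral_integral_swap (intPhi hinv f g h z)
  have hL : rieffel Θ (rieffel Θ (⇑f) (⇑g)) (⇑h) z
      = c4 * (c4 * ∫ x, ∫ w, PhiC Θ f g h z x w) := by
    calc rieffel Θ (rieffel Θ (⇑f) (⇑g)) (⇑h) z
        = c4 * ∫ p : V4 × V4, rieffel Θ (⇑f) (⇑g) (z + thetaAct Θ p.1) * h (z + p.2) *
            eB p.1 p.2 := rfl
      _ = c4 * ∫ x, ∫ y, rieffel Θ (⇑f) (⇑g) (z + thetaAct Θ x) * h (z + y) * eB x y := by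
          congr 1
          rw [Measure.volume_eq_prod]
          exact integral_prod _ (intLHS hinv f g h z)
      _ = c4 * ∫ x, (c4 * ∫ u, f (z + thetaAct Θ x + thetaAct Θ u) *
            (eP u (z + thetaAct Θ x) * mFT g u)) * (eP x z * mFT h x) := by
          refine congrArg _ (intc fun x => ?_)
          simp_rw [mul_assoc]
          rw [integral_const_mul, shiftFT h z x, minkFT_eq, rep' hinv f g (z + thetaAct Θ x),
            mul_assoc]
      _ = c4 * (c4 * ∫ x, ∫ u, f (z + thetaAct Θ x + thetaAct Θ u) *
            (eP u (z + thetaAct Θ x) * mFT g u) * (eP x z * mFT h x)) := by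
          refine congrArg _ ?_
          calc (∫ x, (c4 * ∫ u, f (z + thetaAct Θ x + thetaAct Θ u) *
                (eP u (z + thetaAct Θ x) * mFT g u)) * (eP x z * mFT h x))
              = ∫ x, c4 * ∫ u, f (z + thetaAct Θ x + thetaAct Θ u) *
                  (eP u (z + thetaAct Θ x) * mFT g u) * (eP x z * mFT h x) :=
                intc fun x => by rw [mul_assoc, ← integral_mul_const]
            _ = c4 * ∫ x, ∫ u, f (z + thetaAct Θ x + thetaAct Θ u) *
                  (eP u (z + thetaAct Θ x) * mFT g u) * (eP x z * mFT h x) :=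
                integral_const_mul c4 _
      _ = c4 * (c4 * ∫ x, ∫ w, PhiC Θ f g h z x w) := by
          refine congrArg _ (congrArg _ (intc fun x => ?_))
          have hpt : ∀ u : V4, f (z + thetaAct Θ x + thetaAct Θ u) *
              (eP u (z + thetaAct Θ x) * mFT g u) * (eP x z * mFT h x)
              = (fun w => f (z + thetaAct Θ w) * (eP (w - x) (z + thetaAct Θ x) *
                  mFT g (w - x)) * (eP x z * mFT h x)) (x + u) := by
            intro u
            simp only [add_sub_cancel_left, thetaAct_add, add_assoc]
          calc (∫ u, f (z + thetaAct Θ x + thetaAct Θ u) *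
                (eP u (z + thetaAct Θ x) * mFT g u) * (eP x z * mFT h x))
              = ∫ u, (fun w => f (z + thetaAct Θ w) * (eP (w - x) (z + thetaAct Θ x) *
                  mFT g (w - x)) * (eP x z * mFT h x)) (x + u) := intc hpt
            _ = ∫ w, f (z + thetaAct Θ w) * (eP (w - x) (z + thetaAct Θ x) *
                  mFT g (w - x)) * (eP x z * mFT h x) :=
                integral_add_left_eq_self (μ := (volume : Measure V4))
                  (fun w => f (z + thetaAct Θ w) * (eP (w - x) (z + thetaAct Θ x) *
                    mFT g (w - x)) * (eP x z * mFT h x)) x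
            _ = ∫ w, PhiC Θ f g h z x w := by
                refine intc fun w => ?_
                unfold PhiC
                linear_combination (f (z + thetaAct Θ w) * mFT g (w - x) * mFT h x) *
                  phase3 w x z (thetaAct Θ x)
  have hR : rieffel Θ (⇑f) (rieffel Θ (⇑g) (⇑h)) z
      = c4 * (c4 * ∫ w, ∫ x, PhiC Θ f g h z x w) := by
    calc rieffel Θ (⇑f) (rieffel Θ (⇑g) (⇑h)) z
        = c4 * ∫ p : V4 × V4, f (z + thetaAct Θ p.1) * rieffel Θ (⇑g) (⇑h) (z + p.2) *
            eB p.1 p.2 := rfl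
      _ = c4 * ∫ x, ∫ y, f (z + thetaAct Θ x) * rieffel Θ (⇑g) (⇑h) (z + y) * eB x y := by
          congr 1
          rw [Measure.volume_eq_prod]
          exact integral_prod _ (intRHS hinv f g h z)
      _ = c4 * (c4 * ∫ x, ∫ y, ∫ u, f (z + thetaAct Θ x) *
            (g (z + y + thetaAct Θ u) * (eP u (z + y) * mFT h u) * eB x y)) := by
          refine congrArg _ ?_
          calc (∫ x, ∫ y, f (z + thetaAct Θ x) * rieffel Θ (⇑g) (⇑h) (z + y) * eB x y)
              = ∫ x, c4 * ∫ y, ∫ u, f (z + thetaAct Θ x) *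
                  (g (z + y + thetaAct Θ u) * (eP u (z + y) * mFT h u) * eB x y) := by
                refine intc fun x => ?_
                calc (∫ y, f (z + thetaAct Θ x) * rieffel Θ (⇑g) (⇑h) (z + y) * eB x y)
                    = ∫ y, c4 * ∫ u, f (z + thetaAct Θ x) *
                        (g (z + y + thetaAct Θ u) * (eP u (z + y) * mFT h u) * eB x y) :=
                      intc fun y => by
                        rw [rep' hinv g h (z + y),
                          show ∀ (a b e : ℂ), a * (c4 * b) * e = c4 * (a * (b * e)) from
                            fun a b e => by ring,
                          ← integral_mul_const, ← integral_const_mul]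
                  _ = c4 * ∫ y, ∫ u, f (z + thetaAct Θ x) *
                        (g (z + y + thetaAct Θ u) * (eP u (z + y) * mFT h u) * eB x y) :=
                      integral_const_mul c4 _
            _ = c4 * ∫ x, ∫ y, ∫ u, f (z + thetaAct Θ x) *
                  (g (z + y + thetaAct Θ u) * (eP u (z + y) * mFT h u) * eB x y) :=
                integral_const_mul c4 _
      _ = c4 * (c4 * ∫ x, ∫ u, ∫ y, f (z + thetaAct Θ x) *
            (g (z + y + thetaAct Θ u) * (eP u (z + y) * mFT h u) * eB x y)) := by
          refine congrArg _ (congrArg _ (intc fun x => ?_))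
          apply integral_integral_swap
          have hb : Integrable (fun q : V4 × V4 =>
              ‖f (z + thetaAct Θ x)‖ * (‖g (z + q.1 + thetaAct Θ q.2)‖ * ‖mFT h q.2‖))
              ((volume : Measure V4).prod volume) := by
            have h2 := (intDD' hinv g (mFT h) z).const_mul ‖f (z + thetaAct Θ x)‖
            simpa [mul_assoc] using h2
          refine Integrable.mono' hb ?_ ?_
          · apply Continuous.aestronglyMeasurable
            unfold Function.uncurry
            exact continuous_const.mul (((g.continuous.comp ((continuous_const.add
                continuous_fst).add ((continuous_thetaAct hinv).comp continuous_snd))).mul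
              ((continuous_eP_comp continuous_snd (continuous_const.add
                continuous_fst)).mul ((mFT h).continuous.comp continuous_snd))).mul
              (continuous_eB_comp continuous_const continuous_fst))
          · filter_upwards with q
            unfold Function.uncurry
            rw [norm_mul, norm_mul, norm_mul, norm_mul, norm_eP, norm_eB, one_mul, mul_one]
      _ = c4 * (c4 * ∫ x, ∫ u, (f (z + thetaAct Θ x) * mFT h u * eP u z) *
            (eP (x - u) (z + thetaAct Θ u) * mFT g (x - u))) := by
          refine congrArg _ (congrArg _ (intc fun x => intc fun u => ?_))
          have hpt : ∀ y : V4, f (z + thetaAct Θ x) *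
              (g (z + y + thetaAct Θ u) * (eP u (z + y) * mFT h u) * eB x y)
              = (f (z + thetaAct Θ x) * mFT h u * eP u z) *
                (g (z + thetaAct Θ u + y) * eB (x - u) y) := by
            intro y
            rw [show z + y + thetaAct Θ u = z + thetaAct Θ u + y from by abel]
            linear_combination (f (z + thetaAct Θ x) * g (z + thetaAct Θ u + y) * mFT h u) *
              phase1 u z y x
          rw [intc hpt, integral_const_mul, shiftFT g (z + thetaAct Θ u) (x - u), minkFT_eq]
      _ = c4 * (c4 * ∫ w, ∫ x, PhiC Θ f g h z x w) := by
          refine congrArg _ (congrArg _ (intc fun x => intc fun u => ?_))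
          unfold PhiC
          linear_combination (f (z + thetaAct Θ x) * mFT g (x - u) * mFT h u) *
            phase3 x u z (thetaAct Θ u)
  rw [hL, hR, hswap]
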